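/- In type C_ℓ realized as Φ = {±eᵢ ± eⱼ (i<j)} ∪ {±2eᵢ} in ℝ^ℓ, for every γ in the ℕ-span of the positive roots, the length |γ| equals the positive length |γ|₊. -/

import Mathlib

/-- The length of `γ` with respect to a set `S`: the minimal number of elements
of `S` (with repetition) summing to `γ`. -/
noncomputable def minLen {V : Type*} [AddCommMonoid V] (S : Set V) (γ : V) : ℕ :=
  sInf {r : ℕ | ∃ m : Multiset V, (∀ x ∈ m, x ∈ S) ∧ m.sum = γ ∧ Multiset.card m = r}

/-- The positive roots of type `C_ℓ` in `ℤ^ℓ`: `eᵢ - eⱼ`, `eᵢ + eⱼ` (`i < j`)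
and `2eᵢ`. -/
def posRootsC (ℓ : ℕ) : Set (Fin ℓ → ℤ) :=
  {v | (∃ i, v = (2 : ℤ) • Pi.single i 1) ∨
    ∃ i j, i < j ∧ (v = Pi.single i 1 + Pi.single j 1 ∨ v = Pi.single i 1 - Pi.single j 1)}

/-- All roots of type `C_ℓ`: `±eᵢ ± eⱼ` (`i < j`) and `±2eᵢ`. -/
def rootsC (ℓ : ℕ) : Set (Fin ℓ → ℤ) := posRootsC ℓ ∪ (Neg.neg '' posRootsC ℓ)

namespace LengthC

variable {ℓ : ℕ}

/-- partial sum of coordinates up to `k`. -/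
def pSum (γ : Fin ℓ → ℤ) (k : Fin ℓ) : ℤ :=
  ∑ i ∈ Finset.univ.filter (fun i => i ≤ k), γ i

/-- the invariant characterizing the ℕ-span. -/
def Inv (γ : Fin ℓ → ℤ) : Prop :=
  (∀ k, 0 ≤ pSum γ k) ∧ Even (∑ i, γ i)

lemma sum_single (F : Finset (Fin ℓ)) (i : Fin ℓ) (c : ℤ) :
    ∑ t ∈ F, Pi.single i c t = if i ∈ F then c else 0 := by
  simp [Pi.single_apply]

lemma even_sum {ι : Type*} (s : Finset ι) (f : ι → ℤ) (h : ∀ i ∈ s, Even (f i)) :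
    Even (∑ i ∈ s, f i) := by
  induction s using Finset.cons_induction with
  | empty => simp
  | cons a s ha ih =>
    rw [Finset.sum_cons]
    exact (h a (by simp)).add (ih fun i hi => h i (by simp [hi]))

lemma inv_root {x : Fin ℓ → ℤ} (hx : x ∈ posRootsC ℓ) : Inv x := by
  rcases hx with ⟨i, rfl⟩ | ⟨i, j, hij, rfl | rfl⟩
  · constructor
    · intro k
      unfold pSum
      simp only [Pi.smul_apply, smul_eq_mul]
      rw [← Finset.mul_sum, sum_single]
      split_ifs <;> norm_num
    · simp only [Pi.smul_apply, smul_eq_mul]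
      rw [← Finset.mul_sum, sum_single]
      simp
  · constructor
    · intro k
      unfold pSum
      simp only [Pi.add_apply]
      rw [Finset.sum_add_distrib, sum_single, sum_single]
      split_ifs <;> norm_num
    · simp only [Pi.add_apply]
      rw [Finset.sum_add_distrib, sum_single, sum_single]
      simp
  · constructor
    · intro k
      unfold pSum
      simp only [Pi.sub_apply]
      rw [Finset.sum_sub_distrib, sum_single, sum_single]
      simp only [Finset.mem_filter, Finset.mem_univ, true_and]
      split_ifs with h1 h2 h2
      · norm_num
      · norm_num
      · exact absurd (hij.le.trans h2) h1
      · norm_num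
    · simp only [Pi.sub_apply]
      rw [Finset.sum_sub_distrib, sum_single, sum_single]
      simp

lemma inv_closure {γ : Fin ℓ → ℤ} (hγ : γ ∈ AddSubmonoid.closure (posRootsC ℓ)) :
    Inv γ := by
  induction hγ using AddSubmonoid.closure_induction with
  | mem x hx => exact inv_root hx
  | zero =>
    constructor
    · intro k; unfold pSum; simp
    · simp
  | add a b _ _ ha hb =>
    constructor
    · intro k
      have : pSum (a + b) k = pSum a k + pSum b k := by
        unfold pSum
        simp only [Pi.add_apply]
        rw [Finset.sum_add_distrib]
      rw [this]
      exact add_nonneg (ha.1 k) (hb.1 k)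
    · have : (∑ i, (a + b) i) = (∑ i, a i) + ∑ i, b i := by
        simp only [Pi.add_apply]
        rw [Finset.sum_add_distrib]
      rw [this]
      exact ha.2.add hb.2

lemma even_abs_sum {γ : Fin ℓ → ℤ} (h : Even (∑ i, γ i)) : Even (∑ i, |γ i|) := by
  have h2 : Even (∑ t : Fin ℓ, (|γ t| - γ t)) := by
    apply even_sum
    intro t _
    rcases abs_cases (γ t) with ⟨ht, _⟩ | ⟨ht, _⟩
    · rw [ht]; simp
    · rw [ht]; exact ⟨-γ t, by ring⟩
  have h3 : (∑ t : Fin ℓ, (|γ t| - γ t)) = (∑ t, |γ t|) - ∑ t, γ t :=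
    Finset.sum_sub_distrib _ _
  obtain ⟨c1, hc1⟩ := h2
  obtain ⟨c2, hc2⟩ := h
  exact ⟨c1 + c2, by omega⟩

lemma root_abs_sum {x : Fin ℓ → ℤ} (hx : x ∈ posRootsC ℓ) : ∑ t, |x t| = 2 := by
  rcases hx with ⟨i, rfl⟩ | ⟨i, j, hij, rfl | rfl⟩
  · have key : ∀ t : Fin ℓ, |((2:ℤ) • (Pi.single i 1 : Fin ℓ → ℤ)) t|
        = (Pi.single i (2:ℤ) : Fin ℓ → ℤ) t := by
      intro t
      simp only [Pi.smul_apply, smul_eq_mul, Pi.single_apply]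
      split_ifs <;> norm_num
    rw [Finset.sum_congr rfl fun t _ => key t, sum_single]
    simp
  · have hne : i ≠ j := hij.ne
    have key : ∀ t : Fin ℓ, |((Pi.single i 1 + Pi.single j 1 : Fin ℓ → ℤ)) t|
        = (Pi.single i 1 : Fin ℓ → ℤ) t + (Pi.single j 1 : Fin ℓ → ℤ) t := by
      intro t
      simp only [Pi.add_apply, Pi.single_apply]
      split_ifs with h1 h2 h2
      · exact absurd (h1.symm.trans h2) hne
      · norm_num
      · norm_num
      · norm_num
    rw [Finset.sum_congr rfl fun t _ => key t, Finset.sum_add_distrib,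
      sum_single, sum_single]
    simp
  · have hne : i ≠ j := hij.ne
    have key : ∀ t : Fin ℓ, |((Pi.single i 1 - Pi.single j 1 : Fin ℓ → ℤ)) t|
        = (Pi.single i 1 : Fin ℓ → ℤ) t + (Pi.single j 1 : Fin ℓ → ℤ) t := by
      intro t
      simp only [Pi.sub_apply, Pi.single_apply]
      split_ifs with h1 h2 h2
      · exact absurd (h1.symm.trans h2) hne
      · norm_num
      · norm_num
      · norm_num
    rw [Finset.sum_congr rfl fun t _ => key t, Finset.sum_add_distrib,
      sum_single, sum_single]
    simp

lemma root_abs_sum' {x : Fin ℓ → ℤ} (hx : x ∈ rootsC ℓ) : ∑ t, |x t| = 2 := by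
  rcases hx with hx | ⟨y, hy, rfl⟩
  · exact root_abs_sum hx
  · have key : ∀ t : Fin ℓ, |(-y) t| = |y t| := by intro t; simp
    rw [Finset.sum_congr rfl fun t _ => key t]
    exact root_abs_sum hy

lemma lower_bound (m : Multiset (Fin ℓ → ℤ)) (h : ∀ x ∈ m, x ∈ rootsC ℓ) :
    (∑ t, |m.sum t|) ≤ 2 * (Multiset.card m : ℤ) := by
  induction m using Multiset.induction with
  | empty => simp
  | cons a s ih =>
    have ha : a ∈ rootsC ℓ := h a (Multiset.mem_cons_self a s)
    have hs := ih fun x hx => h x (Multiset.mem_cons_of_mem hx)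
    have h1 : ∀ t : Fin ℓ, |(a ::ₘ s).sum t| ≤ |a t| + |s.sum t| := by
      intro t
      rw [Multiset.sum_cons]
      exact abs_add_le _ _
    calc (∑ t, |(a ::ₘ s).sum t|) ≤ ∑ t, (|a t| + |s.sum t|) :=
          Finset.sum_le_sum fun t _ => h1 t
      _ = (∑ t, |a t|) + ∑ t, |s.sum t| := Finset.sum_add_distrib
      _ ≤ 2 + 2 * (Multiset.card s : ℤ) := by
          rw [root_abs_sum' ha]; omega
      _ ≤ 2 * (Multiset.card (a ::ₘ s) : ℤ) := by
          simp only [Multiset.card_cons]; push_cast; ring_nf; omega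

lemma decomp : ∀ (n : ℕ) (γ : Fin ℓ → ℤ), Inv γ → (∑ i, |γ i|) = 2 * n →
    ∃ m : Multiset (Fin ℓ → ℤ), (∀ x ∈ m, x ∈ posRootsC ℓ) ∧ m.sum = γ ∧
      Multiset.card m = n := by
  intro n
  induction n with
  | zero =>
    intro γ _ h0
    have hz : ∀ i, γ i = 0 := by
      intro i
      have h1 : |γ i| ≤ ∑ t, |γ t| :=
        Finset.single_le_sum (fun t _ => abs_nonneg (γ t)) (Finset.mem_univ i)
      rcases abs_cases (γ i) with ⟨ht, _⟩ | ⟨ht, _⟩ <;> omega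
    refine ⟨0, by simp, ?_, rfl⟩
    funext i
    simp [hz i]
  | succ n ih =>
    intro γ hInv hsum
    suffices h : ∃ ρ ∈ posRootsC ℓ, Inv (γ - ρ) ∧ (∑ i, |(γ - ρ) i|) = 2 * n by
      obtain ⟨ρ, hρ, hinv', hsum'⟩ := h
      obtain ⟨m, hm, hms, hmc⟩ := ih _ hinv' hsum'
      refine ⟨ρ ::ₘ m, ?_, ?_, by simp [hmc]⟩
      · intro x hx
        rcases Multiset.mem_cons.1 hx with rfl | hx
        · exact hρ
        · exact hm x hx
      · rw [Multiset.sum_cons, hms]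
        abel
    by_cases hneg : ∃ j, γ j < 0
    · -- Case A: some coordinate is negative
      classical
      have hFne : (Finset.univ.filter (fun t => γ t < 0)).Nonempty := by
        obtain ⟨j, hj⟩ := hneg
        exact ⟨j, by simp [hj]⟩
      set j := (Finset.univ.filter (fun t => γ t < 0)).min' hFne with hjdef
      have hj : γ j < 0 :=
        (Finset.mem_filter.1 ((Finset.univ.filter (fun t => γ t < 0)).min'_mem hFne)).2
      have hjmin : ∀ t, t < j → 0 ≤ γ t := by
        intro t ht
        by_contra h'
        push_neg at h'
        have : j ≤ t := Finset.min'_le _ t (by simp [h'])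
        exact absurd ht (not_lt.2 this)
      have hset : Finset.univ.filter (fun t => t ≤ j)
          = insert j (Finset.univ.filter (fun t => t < j)) := by
        ext t
        simp only [Finset.mem_filter, Finset.mem_univ, true_and, Finset.mem_insert]
        constructor
        · intro h'; rcases lt_or_eq_of_le h' with h' | h'
          · exact Or.inr h'
          · exact Or.inl h'
        · rintro (rfl | h')
          · exact le_refl _
          · exact h'.le
      have hjni : j ∉ Finset.univ.filter (fun t => t < j) := by simp
      have hsplit : pSum γ j = γ j + ∑ t ∈ Finset.univ.filter (fun t => t < j), γ t := by
        unfold pSum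
        rw [hset, Finset.sum_insert hjni]
      have hpos : 0 < ∑ t ∈ Finset.univ.filter (fun t => t < j), γ t := by
        have := hInv.1 j
        omega
      have hex : ∃ i ∈ Finset.univ.filter (fun t => t < j), 0 < γ i := by
        by_contra h'
        push_neg at h'
        have : (∑ t ∈ Finset.univ.filter (fun t => t < j), γ t) ≤ 0 :=
          Finset.sum_nonpos h'
        omega
      obtain ⟨i, hi', hγi⟩ := hex
      have hij : i < j := (Finset.mem_filter.1 hi').2
      have hval : ∀ t, (γ - ((Pi.single i 1 - Pi.single j 1 : Fin ℓ → ℤ))) t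
          = γ t - (if t = i then 1 else 0) + (if t = j then 1 else 0) := by
        intro t
        simp only [Pi.sub_apply, Pi.single_apply]
        ring
      refine ⟨((Pi.single i 1 - Pi.single j 1 : Fin ℓ → ℤ)),
        Or.inr ⟨i, j, hij, Or.inr rfl⟩, ⟨?_, ?_⟩, ?_⟩
      · intro k
        have hps : pSum (γ - ((Pi.single i 1 - Pi.single j 1 : Fin ℓ → ℤ))) k
            = pSum γ k - (if i ≤ k then 1 else 0) + (if j ≤ k then 1 else 0) := by
          unfold pSum
          rw [Finset.sum_congr rfl fun t _ => hval t]
          rw [Finset.sum_add_distrib, Finset.sum_sub_distrib]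
          congr 1
          · congr 1
            rw [Finset.sum_ite_eq' (Finset.univ.filter (fun t => t ≤ k)) i
              (fun _ => (1:ℤ))]
            simp
          · rw [Finset.sum_ite_eq' (Finset.univ.filter (fun t => t ≤ k)) j
              (fun _ => (1:ℤ))]
            simp
        rw [hps]
        by_cases hjk : j ≤ k
        · have hik : i ≤ k := hij.le.trans hjk
          have := hInv.1 k
          rw [if_pos hik, if_pos hjk]
          omega
        · by_cases hik : i ≤ k
          · have hnn : ∀ t ∈ Finset.univ.filter (fun t => t ≤ k), 0 ≤ γ t := by
              intro t ht
              have htk : t ≤ k := (Finset.mem_filter.1 ht).2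
              exact hjmin t (lt_of_le_of_lt htk (lt_of_not_ge hjk))
            have hione : i ∈ Finset.univ.filter (fun t => t ≤ k) := by simp [hik]
            have h1 : γ i ≤ pSum γ k := Finset.single_le_sum hnn hione
            rw [if_pos hik, if_neg hjk]
            omega
          · rw [if_neg hik, if_neg hjk]
            have := hInv.1 k
            omega
      · have htot : (∑ t, (γ - ((Pi.single i 1 - Pi.single j 1 : Fin ℓ → ℤ))) t)
            = ∑ t, γ t := by
          rw [Finset.sum_congr rfl fun t _ => hval t]
          rw [Finset.sum_add_distrib, Finset.sum_sub_distrib]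
          simp [Finset.sum_ite_eq']
        rw [htot]
        exact hInv.2
      · have habs' : ∀ t, |(γ - ((Pi.single i 1 - Pi.single j 1 : Fin ℓ → ℤ))) t|
            = |γ t| - (if t = i then 1 else 0) - (if t = j then 1 else 0) := by
          intro t
          rw [hval t]
          split_ifs with h1 h2 h2
          · exact absurd (h1.symm.trans h2) hij.ne
          · have h3 : 0 < γ t := by rw [h1]; exact hγi
            rw [abs_of_nonneg (by omega : (0:ℤ) ≤ γ t - 1 + 0),
              abs_of_nonneg (by omega : (0:ℤ) ≤ γ t)]
            ring
          · have h3 : γ t < 0 := by rw [h2]; exact hj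
            rw [abs_of_nonpos (by omega : γ t - 0 + 1 ≤ 0),
              abs_of_nonpos (by omega : γ t ≤ 0)]
            ring
          · ring_nf
        rw [Finset.sum_congr rfl fun t _ => habs' t]
        rw [Finset.sum_sub_distrib, Finset.sum_sub_distrib]
        simp only [Finset.sum_ite_eq', Finset.mem_univ, if_pos]
        omega
    · -- Case B: all coordinates nonnegative
      push_neg at hneg
      have hex : ∃ i, 0 < γ i := by
        by_contra h'
        push_neg at h'
        have hz : ∀ i, γ i = 0 := fun i => le_antisymm (h' i) (hneg i)
        have : (∑ i, |γ i|) = 0 := by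
          apply Finset.sum_eq_zero
          intro i _
          simp [hz i]
        omega
      obtain ⟨i, hi⟩ := hex
      have hnonneg_inv : ∀ δ : Fin ℓ → ℤ, (∀ t, 0 ≤ δ t) → ∀ k, 0 ≤ pSum δ k :=
        fun δ hδ k => Finset.sum_nonneg fun t _ => hδ t
      by_cases h2 : 2 ≤ γ i
      · have hval : ∀ t, (γ - (2:ℤ) • (Pi.single i 1 : Fin ℓ → ℤ)) t
            = γ t - (if t = i then 2 else 0) := by
          intro t
          simp only [Pi.sub_apply, Pi.smul_apply, smul_eq_mul, Pi.single_apply]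
          split_ifs <;> ring
        refine ⟨(2:ℤ) • (Pi.single i 1 : Fin ℓ → ℤ), Or.inl ⟨i, rfl⟩, ⟨?_, ?_⟩, ?_⟩
        · apply hnonneg_inv
          intro t
          rw [hval t]
          split_ifs with h'
          · have : 2 ≤ γ t := by rw [h']; exact h2
            omega
          · have := hneg t
            omega
        · have htot : (∑ t, (γ - (2:ℤ) • (Pi.single i 1 : Fin ℓ → ℤ)) t)
              = (∑ t, γ t) - 2 := by
            rw [Finset.sum_congr rfl fun t _ => hval t, Finset.sum_sub_distrib]
            simp [Finset.sum_ite_eq']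
          rw [htot]
          obtain ⟨c, hc⟩ := hInv.2
          exact ⟨c - 1, by omega⟩
        · have habs' : ∀ t, |(γ - (2:ℤ) • (Pi.single i 1 : Fin ℓ → ℤ)) t|
              = |γ t| - (if t = i then 2 else 0) := by
            intro t
            rw [hval t]
            split_ifs with h'
            · have h3 : 2 ≤ γ t := by rw [h']; exact h2
              rw [abs_of_nonneg (by omega : (0:ℤ) ≤ γ t - 2),
                abs_of_nonneg (by omega : (0:ℤ) ≤ γ t)]
            · have := hneg t
              rw [abs_of_nonneg (by omega : (0:ℤ) ≤ γ t - 0),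
                abs_of_nonneg (by omega : (0:ℤ) ≤ γ t)]
          rw [Finset.sum_congr rfl fun t _ => habs' t, Finset.sum_sub_distrib]
          simp only [Finset.sum_ite_eq', Finset.mem_univ, if_pos]
          omega
      · have hγi1 : γ i = 1 := by
          have := hneg i
          omega
        have hexj : ∃ j, j ≠ i ∧ 0 < γ j := by
          by_contra h'
          push_neg at h'
          have hz : ∀ t, t ≠ i → γ t = 0 := fun t ht =>
            le_antisymm (h' t ht) (hneg t)
          have htot : (∑ t, γ t) = 1 := by
            rw [Finset.sum_eq_single i]
            · exact hγi1
            · intro t _ ht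
              exact hz t ht
            · intro h''
              exact absurd (Finset.mem_univ i) h''
          obtain ⟨c, hc⟩ := hInv.2
          rw [htot] at hc
          omega
        obtain ⟨j, hji, hj⟩ := hexj
        obtain ⟨a, b, hab, ha, hb⟩ : ∃ a b, a < b ∧ 0 < γ a ∧ 0 < γ b := by
          rcases lt_or_gt_of_ne hji with h' | h'
          · exact ⟨j, i, h', hj, hi⟩
          · exact ⟨i, j, h', hi, hj⟩
        have hval : ∀ t, (γ - ((Pi.single a 1 + Pi.single b 1 : Fin ℓ → ℤ))) t
            = γ t - (if t = a then 1 else 0) - (if t = b then 1 else 0) := by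
          intro t
          simp only [Pi.sub_apply, Pi.add_apply, Pi.single_apply]
          ring
        refine ⟨((Pi.single a 1 + Pi.single b 1 : Fin ℓ → ℤ)),
          Or.inr ⟨a, b, hab, Or.inl rfl⟩, ⟨?_, ?_⟩, ?_⟩
        · apply hnonneg_inv
          intro t
          rw [hval t]
          split_ifs with h1 h2 h2
          · exact absurd (h1.symm.trans h2) hab.ne
          · have : 0 < γ t := by rw [h1]; exact ha
            omega
          · have : 0 < γ t := by rw [h2]; exact hb
            omega
          · have := hneg t
            omega
        · have htot : (∑ t, (γ - ((Pi.single a 1 + Pi.single b 1 : Fin ℓ → ℤ))) t)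
              = (∑ t, γ t) - 2 := by
            rw [Finset.sum_congr rfl fun t _ => hval t, Finset.sum_sub_distrib,
              Finset.sum_sub_distrib]
            simp [Finset.sum_ite_eq']
            ring
          rw [htot]
          obtain ⟨c, hc⟩ := hInv.2
          exact ⟨c - 1, by omega⟩
        · have habs' : ∀ t, |(γ - ((Pi.single a 1 + Pi.single b 1 : Fin ℓ → ℤ))) t|
              = |γ t| - (if t = a then 1 else 0) - (if t = b then 1 else 0) := by
            intro t
            rw [hval t]
            split_ifs with h1 h2 h2
            · exact absurd (h1.symm.trans h2) hab.ne
            · have h3 : 0 < γ t := by rw [h1]; exact ha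
              rw [abs_of_nonneg (by omega : (0:ℤ) ≤ γ t - 1 - 0),
                abs_of_nonneg (by omega : (0:ℤ) ≤ γ t)]
            · have h3 : 0 < γ t := by rw [h2]; exact hb
              rw [abs_of_nonneg (by omega : (0:ℤ) ≤ γ t - 0 - 1),
                abs_of_nonneg (by omega : (0:ℤ) ≤ γ t)]
            · have := hneg t
              rw [abs_of_nonneg (by omega : (0:ℤ) ≤ γ t - 0 - 0),
                abs_of_nonneg (by omega : (0:ℤ) ≤ γ t)]
          rw [Finset.sum_congr rfl fun t _ => habs' t, Finset.sum_sub_distrib,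
            Finset.sum_sub_distrib]
          simp only [Finset.sum_ite_eq', Finset.mem_univ, if_pos]
          omega

end LengthC

/-- In type `C_ℓ`, for every `γ` in the ℕ-span of the positive roots, the length
equals the positive length. -/
theorem length_eq_posLength_C (ℓ : ℕ) (γ : Fin ℓ → ℤ)
    (hγ : γ ∈ AddSubmonoid.closure (posRootsC ℓ)) :
    minLen (rootsC ℓ) γ = minLen (posRootsC ℓ) γ := by
  have hInv := LengthC.inv_closure hγ
  have heven := LengthC.even_abs_sum hInv.2
  have h0 : 0 ≤ ∑ i, |γ i| := Finset.sum_nonneg fun i _ => abs_nonneg _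
  obtain ⟨c, hc⟩ := heven
  have hn : (∑ i, |γ i|) = 2 * (c.toNat : ℤ) := by omega
  obtain ⟨m, hm, hms, hmc⟩ := LengthC.decomp c.toNat γ hInv (by exact_mod_cast hn)
  set n := c.toNat
  have hwitpos : n ∈ {r : ℕ | ∃ m : Multiset (Fin ℓ → ℤ),
      (∀ x ∈ m, x ∈ posRootsC ℓ) ∧ m.sum = γ ∧ Multiset.card m = r} :=
    ⟨m, hm, hms, hmc⟩
  have hwitall : n ∈ {r : ℕ | ∃ m : Multiset (Fin ℓ → ℤ),
      (∀ x ∈ m, x ∈ rootsC ℓ) ∧ m.sum = γ ∧ Multiset.card m = r} :=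
    ⟨m, fun x hx => Or.inl (hm x hx), hms, hmc⟩
  have hlb : ∀ r ∈ {r : ℕ | ∃ m : Multiset (Fin ℓ → ℤ),
      (∀ x ∈ m, x ∈ rootsC ℓ) ∧ m.sum = γ ∧ Multiset.card m = r}, n ≤ r := by
    rintro r ⟨m', hm', hms', hmc'⟩
    have := LengthC.lower_bound m' hm'
    rw [hms', hmc'] at this
    omega
  have hall : minLen (rootsC ℓ) γ = n :=
    le_antisymm (Nat.sInf_le hwitall) (le_csInf ⟨n, hwitall⟩ hlb)
  have hposle : minLen (posRootsC ℓ) γ = n := by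
    refine le_antisymm (Nat.sInf_le hwitpos) (le_csInf ⟨n, hwitpos⟩ ?_)
    rintro r ⟨m', hm', hms', hmc'⟩
    exact hlb r ⟨m', fun x hx => Or.inl (hm' x hx), hms', hmc'⟩
  rw [hall, hposle]
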